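/- arXiv:1602.07501 — 2 statements merged into one kernel-verified Lean document; each statement's English description precedes it below -/
import Mathlib

section
/- Let $G$ be a finite group of odd order acting vertex-transitively on a connected graph $\Gamma$ whose valency is strictly less than the smallest prime divisor $p$ of $|G|$. Then for any vertex $\alpha$, $\gcd(|G|, |A_\alpha|) = 1$, where $A = \mathrm{Aut}(\Gamma)$ and $A_\alpha$ is the vertex stabilizer. -/
private lemma fix_neighbor {V : Type*} [Fintype V] {Γ : SimpleGraph V}
    {σ : Equiv.Perm V} {q : ℕ} (hq : q.Prime) (hσq : σ ^ q = 1)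
    (hpres : ∀ x y : V, Γ.Adj (σ x) (σ y) ↔ Γ.Adj x y)
    {v w : V} (hvw : Γ.Adj v w) (hval : Nat.card (Γ.neighborSet v) < q)
    (hfix : σ v = v) : σ w = w := by
  have hiter : ∀ i : ℕ, Γ.Adj v (σ^[i] w) := by
    intro i
    induction i with
    | zero => simpa using hvw
    | succ n ih =>
      rw [Function.iterate_succ_apply']
      rw [← hpres v (σ^[n] w), hfix] at ih
      exact ih
  have hper : Function.IsPeriodicPt σ q w := by
    show σ^[q] w = w
    rw [← Equiv.Perm.coe_pow, hσq]; rfl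
  have hdvd := hper.minimalPeriod_dvd
  rcases (Nat.Prime.eq_one_or_self_of_dvd hq _ hdvd) with h1 | hqq
  · exact Function.minimalPeriod_eq_one_iff_isFixedPt.mp h1
  · exfalso
    have hinj : Function.Injective (fun i : Fin q => (⟨σ^[(i : ℕ)] w, hiter i⟩ : Γ.neighborSet v)) := by
      intro i j hij
      have := Function.iterate_injOn_Iio_minimalPeriod (f := σ) (x := w)
        (by rw [hqq]; exact i.2) (by rw [hqq]; exact j.2) (by simpa using congrArg Subtype.val hij)
      exact Fin.ext this
    have := Nat.card_le_card_of_injective _ hinj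
    simp only [Nat.card_eq_fintype_card, Fintype.card_fin] at this
    exact absurd hval (not_lt.mpr this)

/-- Let `G` be a finite group of odd order acting (by graph automorphisms, via `φ`)
vertex-transitively on a connected graph `Γ` whose valency is strictly less than the
smallest prime divisor of `|G|`.  Then for any vertex `α`, `gcd(|G|, |A_α|) = 1`, where
`A_α` is the stabilizer of `α` in the full automorphism group of `Γ`. -/
theorem gcd_stabilizer_eq_one {G V : Type*} [Group G] [Fintype G] [Fintype V]
    (hodd : Odd (Nat.card G))
    (Γ : SimpleGraph V) (hconn : Γ.Connected)
    (φ : G →* Equiv.Perm V)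
    (haut : ∀ g : G, ∀ x y : V, Γ.Adj (φ g x) (φ g y) ↔ Γ.Adj x y)
    (htrans : ∀ u v : V, ∃ g : G, φ g u = v)
    (hval : ∀ v : V, Nat.card (Γ.neighborSet v) < (Nat.card G).minFac) :
    ∀ α : V,
      Nat.gcd (Nat.card G)
        (Nat.card {σ : Equiv.Perm V //
          (∀ x y : V, Γ.Adj (σ x) (σ y) ↔ Γ.Adj x y) ∧ σ α = α}) = 1 := by
  intro α
  classical
  -- the stabilizer as a subgroup of Perm V
  set S : Subgroup (Equiv.Perm V) :=
    { carrier := {σ | (∀ x y : V, Γ.Adj (σ x) (σ y) ↔ Γ.Adj x y) ∧ σ α = α}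
      one_mem' := by simp
      mul_mem' := by
        rintro σ τ ⟨hσ, hσα⟩ ⟨hτ, hτα⟩
        constructor
        · intro x y
          simp only [Equiv.Perm.mul_apply]
          rw [hσ, hτ]
        · simp [Equiv.Perm.mul_apply, hτα, hσα]
      inv_mem' := by
        rintro σ ⟨hσ, hσα⟩
        constructor
        · intro x y
          rw [← hσ (σ⁻¹ x) (σ⁻¹ y)]
          simp
        · exact σ.injective (by simp [hσα]) } with hS
  have hcard : Nat.card {σ : Equiv.Perm V //
      (∀ x y : V, Γ.Adj (σ x) (σ y) ↔ Γ.Adj x y) ∧ σ α = α} = Nat.card S :=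
    Nat.card_congr (Equiv.subtypeEquivRight (fun _ => Iff.rfl))
  rw [hcard]
  by_contra hgcd
  set d := Nat.gcd (Nat.card G) (Nat.card S) with hd
  have hdne : d ≠ 1 := hgcd
  have hnG : Nat.card G ≠ 0 := Nat.card_pos.ne'
  have hd2 : 2 ≤ d := by
    rcases Nat.lt_or_ge d 2 with h | h
    · interval_cases d
      · exact absurd (Nat.eq_zero_of_gcd_eq_zero_left hd.symm) hnG
      · exact absurd rfl hdne
    · exact h
  set q := d.minFac with hqdef
  have hq : q.Prime := Nat.minFac_prime hdne
  have hqG : q ∣ Nat.card G := (Nat.minFac_dvd d).trans (Nat.gcd_dvd_left _ _)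
  have hqS : q ∣ Nat.card S := (Nat.minFac_dvd d).trans (Nat.gcd_dvd_right _ _)
  have hpq : (Nat.card G).minFac ≤ q := Nat.minFac_le_of_dvd hq.two_le hqG
  -- Cauchy: an element of order q in S
  have hqS' : q ∣ Fintype.card S := by rwa [← Nat.card_eq_fintype_card]
  haveI : Fact q.Prime := ⟨hq⟩
  obtain ⟨g, hg⟩ := exists_prime_orderOf_dvd_card q hqS'
  set σ : Equiv.Perm V := (g : Equiv.Perm V) with hσdef
  have hord : orderOf σ = q := by rw [hσdef, orderOf_submonoid]; exact hg
  have hσq : σ ^ q = 1 := by rw [← hord]; exact pow_orderOf_eq_one σ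
  obtain ⟨hpres, hα⟩ := g.2
  -- σ fixes every vertex, by connectivity
  have hstep : ∀ u w : V, σ u = u → Γ.Adj u w → σ w = w := fun u w hu hadj =>
    fix_neighbor hq hσq hpres hadj (lt_of_lt_of_le (hval u) hpq) hu
  have key : ∀ (u v : V) (p : Γ.Walk u v), σ u = u → σ v = v := by
    intro u v p
    induction p with
    | nil => exact id
    | cons hadj p ih => exact fun hu => ih (hstep _ _ hu hadj)
  have hfixall : ∀ v : V, σ v = v := fun v => key α v (hconn α v).some hα
  have hσ1 : σ = 1 := Equiv.ext hfixall
  rw [hσ1, orderOf_one] at hord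
  exact hq.one_lt.ne' hord.symm
end

section
/- Let $G$ be a finite group, $H$ a core-free subgroup, and $S \subseteq G \setminus H$. If $\varphi : \langle H \cup S\rangle \to G$ is an injective group homomorphism with $\varphi(H) = H$, and if for every graph $\Sigma = \mathrm{Cos}(G,H,HTH)$ isomorphic to $\Gamma = \mathrm{Cos}(G,H,HSH)$ there exists $\tau \in \mathrm{Aut}(G)$ with $H^\tau = H$ and $HS^\tau H = HTH$ (i.e., $\Gamma$ is a GI-graph of $G$), then there exists $\tau \in \mathrm{Aut}(G)$ such that $H^\tau = H$ and $\langle H \cup S \rangle^\tau = \langle H \cup \varphi(S) \rangle$. -/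
open scoped Pointwise


/-- The adjacency relation of the coset (di)graph `Cos(G,K,D)` on right cosets of `K`:
`Kx → Ky` iff `y * x⁻¹` lies in the `K`-bi-invariant set determined by `D`. -/
def cosetRel {G : Type*} [Group G] (K : Subgroup G) (D : Set G) :
    Quotient (QuotientGroup.rightRel K) → Quotient (QuotientGroup.rightRel K) → Prop :=
  Quotient.lift₂ (fun x y => ∃ k₁ ∈ K, ∃ k₂ ∈ K, k₁ * (y * x⁻¹) * k₂ ∈ D)
    (by
      intro x y x' y' hx hy
      replace hx := QuotientGroup.rightRel_apply.mp hx
      replace hy := QuotientGroup.rightRel_apply.mp hy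
      apply propext
      constructor
      · rintro ⟨k₁, hk₁, k₂, hk₂, hm⟩
        refine ⟨k₁ * (y' * y⁻¹)⁻¹, K.mul_mem hk₁ (K.inv_mem hy), (x' * x⁻¹) * k₂,
          K.mul_mem hx hk₂, ?_⟩
        convert hm using 1
        group
      · rintro ⟨k₁, hk₁, k₂, hk₂, hm⟩
        refine ⟨k₁ * (y' * y⁻¹), K.mul_mem hk₁ hy, (x' * x⁻¹)⁻¹ * k₂,
          K.mul_mem (K.inv_mem hx) hk₂, ?_⟩
        convert hm using 1
        group)

section AuxLemmas
variable {G : Type*} [Group G]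

lemma mem_HSH_iff (H : Subgroup G) (S : Set G) (z : G) :
    z ∈ (H : Set G) * S * (H : Set G) ↔ ∃ h ∈ H, ∃ s ∈ S, ∃ h' ∈ H, h * s * h' = z := by
  constructor
  · rintro ⟨a, ⟨h, hh, s, hs, rfl⟩, h', hh', rfl⟩
    exact ⟨h, hh, s, hs, h', hh', rfl⟩
  · rintro ⟨h, hh, s, hs, h', hh', rfl⟩
    exact ⟨h * s, ⟨h, hh, s, hs, rfl⟩, h', hh', rfl⟩

lemma closure_union_HSH (H : Subgroup G) (A : Set G) :
    Subgroup.closure ((H : Set G) ∪ A) =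
      Subgroup.closure ((H : Set G) ∪ (H : Set G) * A * (H : Set G)) := by
  apply le_antisymm
  · apply Subgroup.closure_mono
    apply Set.union_subset_union_right
    intro a ha
    exact (mem_HSH_iff H A a).mpr ⟨1, H.one_mem, a, ha, 1, H.one_mem, by group⟩
  · rw [Subgroup.closure_le]
    rintro z (hz | hz)
    · exact Subgroup.subset_closure (Or.inl hz)
    · obtain ⟨h, hh, s, hs, h', hh', rfl⟩ := (mem_HSH_iff H A z).mp hz
      exact mul_mem (mul_mem (Subgroup.subset_closure (Or.inl hh))
        (Subgroup.subset_closure (Or.inr hs))) (Subgroup.subset_closure (Or.inl hh'))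

end AuxLemmas

lemma exists_coset_iso {G : Type*} [Group G] [Finite G] (H M M' : Subgroup G)
    (hHM : H ≤ M) (hHM' : H ≤ M') (D D' : Set G)
    (hDM : D ⊆ (M : Set G)) (hD'M' : D' ⊆ (M' : Set G))
    (Φ : ↥M ≃* ↥M')
    (hΦH : ∀ m : ↥M, ((Φ m : G) ∈ H ↔ (m : G) ∈ H))
    (hΦD : ∀ m : ↥M, ((Φ m : G) ∈ D' ↔ (m : G) ∈ D)) :
    ∃ e : Quotient (QuotientGroup.rightRel H) ≃ Quotient (QuotientGroup.rightRel H),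
      ∀ u v, cosetRel H D u v ↔ cosetRel H D' (e u) (e v) := by
  classical
  -- equal number of right cosets of M and M'
  have hcard : Nat.card (Quotient (QuotientGroup.rightRel M)) =
      Nat.card (Quotient (QuotientGroup.rightRel M')) := by
    have e1 := Nat.card_congr (QuotientGroup.quotientRightRelEquivQuotientLeftRel (M : Subgroup G))
    have e2 := Nat.card_congr (QuotientGroup.quotientRightRelEquivQuotientLeftRel M')
    have h1 := Subgroup.card_eq_card_quotient_mul_card_subgroup M
    have h2 := Subgroup.card_eq_card_quotient_mul_card_subgroup M'
    have hMM' : Nat.card M = Nat.card M' := Nat.card_congr Φ.toEquiv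
    have hpos : 0 < Nat.card M' := Nat.card_pos
    rw [e1, e2]
    refine Nat.eq_of_mul_eq_mul_right hpos ?_
    rw [← hMM', ← h1, h2, hMM']
  obtain ⟨ψ⟩ := Finite.card_eq.mp hcard
  have hrep : ∀ x : G, x * ((Quotient.mk (QuotientGroup.rightRel M) x).out)⁻¹ ∈ M := by
    intro x
    exact QuotientGroup.rightRel_apply.mp
      (Quotient.exact ((Quotient.mk (QuotientGroup.rightRel M) x).out_eq))
  set f : G → G := fun x =>
    ((Φ ⟨x * ((Quotient.mk (QuotientGroup.rightRel M) x).out)⁻¹, hrep x⟩ : ↥M') : G) *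
      (ψ (Quotient.mk (QuotientGroup.rightRel M) x)).out with hf
  have hF1 : ∀ x, Quotient.mk (QuotientGroup.rightRel M') (f x) =
      ψ (Quotient.mk (QuotientGroup.rightRel M) x) := by
    intro x
    conv_rhs => rw [← Quotient.out_eq (ψ (Quotient.mk (QuotientGroup.rightRel M) x))]
    refine (Quotient.sound (QuotientGroup.rightRel_apply.mpr ?_)).symm
    have : f x * ((ψ (Quotient.mk (QuotientGroup.rightRel M) x)).out)⁻¹ =
        ((Φ ⟨x * ((Quotient.mk (QuotientGroup.rightRel M) x).out)⁻¹, hrep x⟩ : ↥M') : G) := by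
      simp only [hf]; group
    rw [this]
    exact SetLike.coe_mem _
  have hF2 : ∀ x y, Quotient.mk (QuotientGroup.rightRel M) x =
        Quotient.mk (QuotientGroup.rightRel M) y →
      ∀ hm : y * x⁻¹ ∈ M, f y * (f x)⁻¹ = ((Φ ⟨y * x⁻¹, hm⟩ : ↥M') : G) := by
    intro x y h hm
    have hox : (Quotient.mk (QuotientGroup.rightRel M) x).out =
        (Quotient.mk (QuotientGroup.rightRel M) y).out := by rw [h]
    have hψx : (ψ (Quotient.mk (QuotientGroup.rightRel M) x)).out =
        (ψ (Quotient.mk (QuotientGroup.rightRel M) y)).out := by rw [h]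
    have hab : (⟨y * ((Quotient.mk (QuotientGroup.rightRel M) y).out)⁻¹, hrep y⟩ : ↥M) *
        (⟨x * ((Quotient.mk (QuotientGroup.rightRel M) x).out)⁻¹, hrep x⟩ : ↥M)⁻¹ =
        ⟨y * x⁻¹, hm⟩ := by
      ext
      push_cast
      rw [hox]
      group
    simp only [hf]
    rw [hψx, ← hab, map_mul, map_inv]
    push_cast
    group
  have hF3 : ∀ (y : G) (m' : ↥M'), ∃ y₀,
      Quotient.mk (QuotientGroup.rightRel M) y₀ = Quotient.mk (QuotientGroup.rightRel M) y ∧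
      f y₀ = (m' : G) * f y := by
    intro y m'
    set a : ↥M := ⟨y * ((Quotient.mk (QuotientGroup.rightRel M) y).out)⁻¹, hrep y⟩ with ha
    set m : ↥M := Φ.symm (m' * Φ a) with hm
    refine ⟨(m : G) * (Quotient.mk (QuotientGroup.rightRel M) y).out, ?_, ?_⟩
    · refine Quotient.sound (QuotientGroup.rightRel_apply.mpr ?_)
      have : y * ((m : G) * (Quotient.mk (QuotientGroup.rightRel M) y).out)⁻¹ =
          y * ((Quotient.mk (QuotientGroup.rightRel M) y).out)⁻¹ * (m : G)⁻¹ := by group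
      rw [this]
      exact M.mul_mem (hrep y) (M.inv_mem m.2)
    · have h0 : Quotient.mk (QuotientGroup.rightRel M) ((m : G) * (Quotient.mk (QuotientGroup.rightRel M) y).out) = Quotient.mk (QuotientGroup.rightRel M) y := by
        refine Quotient.sound (QuotientGroup.rightRel_apply.mpr ?_)
        have : y * ((m : G) * (Quotient.mk (QuotientGroup.rightRel M) y).out)⁻¹ =
            y * ((Quotient.mk (QuotientGroup.rightRel M) y).out)⁻¹ * (m : G)⁻¹ := by group
        rw [this]
        exact M.mul_mem (hrep y) (M.inv_mem m.2)
      have hout : (Quotient.mk (QuotientGroup.rightRel M) ((m : G) * (Quotient.mk (QuotientGroup.rightRel M) y).out)).out = (Quotient.mk (QuotientGroup.rightRel M) y).out := by rw [h0]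
      have hψ : (ψ (Quotient.mk (QuotientGroup.rightRel M) ((m : G) * (Quotient.mk (QuotientGroup.rightRel M) y).out))).out = (ψ (Quotient.mk (QuotientGroup.rightRel M) y)).out := by rw [h0]
      have hsub : (⟨(m : G) * (Quotient.mk (QuotientGroup.rightRel M) y).out * ((Quotient.mk (QuotientGroup.rightRel M) ((m : G) * (Quotient.mk (QuotientGroup.rightRel M) y).out)).out)⁻¹, hrep _⟩ : ↥M) = m := by
        ext
        push_cast
        rw [hout]
        group
      simp only [hf]
      rw [hsub, hψ, hm, MulEquiv.apply_symm_apply, ← ha]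
      push_cast
      group
  have hdesc : ∀ a b : G, @Setoid.r G (QuotientGroup.rightRel H) a b →
      @Setoid.r G (QuotientGroup.rightRel H) (f a) (f b) := by
    intro a b hab
    have hH : b * a⁻¹ ∈ H := QuotientGroup.rightRel_apply.mp hab
    have hq : Quotient.mk (QuotientGroup.rightRel M) a = Quotient.mk (QuotientGroup.rightRel M) b :=
      Quotient.sound (QuotientGroup.rightRel_apply.mpr (hHM hH))
    refine QuotientGroup.rightRel_apply.mpr ?_
    rw [hF2 a b hq (hHM hH)]
    exact (hΦH _).mpr hH
  set e₀ : Quotient (QuotientGroup.rightRel H) → Quotient (QuotientGroup.rightRel H) :=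
    Quotient.map f (fun a b hab => hdesc a b hab) with he₀
  have he₀mk : ∀ x, e₀ (Quotient.mk (QuotientGroup.rightRel H) x) =
      Quotient.mk (QuotientGroup.rightRel H) (f x) := fun x => rfl
  have hinj₀ : Function.Injective e₀ := by
    intro u v huv
    obtain ⟨x, rfl⟩ := Quotient.exists_rep u
    obtain ⟨y, rfl⟩ := Quotient.exists_rep v
    rw [he₀mk, he₀mk] at huv
    have h1 : f y * (f x)⁻¹ ∈ H := QuotientGroup.rightRel_apply.mp (Quotient.exact huv)
    have h2 : Quotient.mk (QuotientGroup.rightRel M') (f x) =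
        Quotient.mk (QuotientGroup.rightRel M') (f y) :=
      Quotient.sound (QuotientGroup.rightRel_apply.mpr (hHM' h1))
    rw [hF1, hF1] at h2
    have hq : Quotient.mk (QuotientGroup.rightRel M) x = Quotient.mk (QuotientGroup.rightRel M) y :=
      ψ.injective h2
    have hmM : y * x⁻¹ ∈ M := QuotientGroup.rightRel_apply.mp (Quotient.exact hq)
    rw [hF2 x y hq hmM] at h1
    exact Quotient.sound (QuotientGroup.rightRel_apply.mpr ((hΦH _).mp h1))
  refine ⟨Equiv.ofBijective e₀ (show Function.Bijective e₀ from ⟨hinj₀, Finite.surjective_of_injective hinj₀⟩), ?_⟩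
  intro u v
  obtain ⟨x, rfl⟩ := Quotient.exists_rep u
  obtain ⟨y, rfl⟩ := Quotient.exists_rep v
  rw [Equiv.ofBijective_apply, Equiv.ofBijective_apply, he₀mk, he₀mk]
  show (∃ k₁ ∈ H, ∃ k₂ ∈ H, k₁ * (y * x⁻¹) * k₂ ∈ D) ↔
    (∃ k₁ ∈ H, ∃ k₂ ∈ H, k₁ * (f y * (f x)⁻¹) * k₂ ∈ D')
  constructor
  · rintro ⟨k₁, hk₁, k₂, hk₂, hm⟩
    have hyx : (k₁ * y) * (k₂⁻¹ * x)⁻¹ = k₁ * (y * x⁻¹) * k₂ := by group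
    have hmM : (k₁ * y) * (k₂⁻¹ * x)⁻¹ ∈ M := by rw [hyx]; exact hDM hm
    have hq : Quotient.mk (QuotientGroup.rightRel M) (k₂⁻¹ * x) =
        Quotient.mk (QuotientGroup.rightRel M) (k₁ * y) :=
      Quotient.sound (QuotientGroup.rightRel_apply.mpr hmM)
    have hq1 : Quotient.mk (QuotientGroup.rightRel M) y =
        Quotient.mk (QuotientGroup.rightRel M) (k₁ * y) :=
      Quotient.sound (QuotientGroup.rightRel_apply.mpr (by
        have : (k₁ * y) * y⁻¹ = k₁ := by group
        rw [this]; exact hHM hk₁))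
    have hq2 : Quotient.mk (QuotientGroup.rightRel M) x =
        Quotient.mk (QuotientGroup.rightRel M) (k₂⁻¹ * x) :=
      Quotient.sound (QuotientGroup.rightRel_apply.mpr (by
        have : (k₂⁻¹ * x) * x⁻¹ = k₂⁻¹ := by group
        rw [this]; exact hHM (H.inv_mem hk₂)))
    have hm1 : (k₁ * y) * y⁻¹ ∈ M := QuotientGroup.rightRel_apply.mp (Quotient.exact hq1)
    have hm2 : (k₂⁻¹ * x) * x⁻¹ ∈ M := QuotientGroup.rightRel_apply.mp (Quotient.exact hq2)
    have hH1 : f (k₁ * y) * (f y)⁻¹ ∈ H := by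
      rw [hF2 y (k₁ * y) hq1 hm1]
      refine (hΦH _).mpr ?_
      show (k₁ * y) * y⁻¹ ∈ H
      have : (k₁ * y) * y⁻¹ = k₁ := by group
      rw [this]; exact hk₁
    have hH2 : f (k₂⁻¹ * x) * (f x)⁻¹ ∈ H := by
      rw [hF2 x (k₂⁻¹ * x) hq2 hm2]
      refine (hΦH _).mpr ?_
      show (k₂⁻¹ * x) * x⁻¹ ∈ H
      have : (k₂⁻¹ * x) * x⁻¹ = k₂⁻¹ := by group
      rw [this]; exact H.inv_mem hk₂
    have hD' : f (k₁ * y) * (f (k₂⁻¹ * x))⁻¹ ∈ D' := by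
      rw [hF2 (k₂⁻¹ * x) (k₁ * y) hq hmM]
      refine (hΦD _).mpr ?_
      show (k₁ * y) * (k₂⁻¹ * x)⁻¹ ∈ D
      rw [hyx]; exact hm
    refine ⟨f (k₁ * y) * (f y)⁻¹, hH1, f x * (f (k₂⁻¹ * x))⁻¹, ?_, ?_⟩
    · have : f x * (f (k₂⁻¹ * x))⁻¹ = (f (k₂⁻¹ * x) * (f x)⁻¹)⁻¹ := by group
      rw [this]; exact H.inv_mem hH2
    · have : (f (k₁ * y) * (f y)⁻¹) * (f y * (f x)⁻¹) * (f x * (f (k₂⁻¹ * x))⁻¹) =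
        f (k₁ * y) * (f (k₂⁻¹ * x))⁻¹ := by group
      rw [this]; exact hD'
  · rintro ⟨k₁, hk₁, k₂, hk₂, hm⟩
    obtain ⟨y₁, hqy₁, hfy₁⟩ := hF3 y ⟨k₁, hHM' hk₁⟩
    obtain ⟨x₁, hqx₁, hfx₁⟩ := hF3 x ⟨k₂⁻¹, hHM' (H.inv_mem hk₂)⟩
    have hval : f y₁ * (f x₁)⁻¹ = k₁ * (f y * (f x)⁻¹) * k₂ := by
      rw [hfy₁, hfx₁]
      show (k₁ * f y) * (k₂⁻¹ * f x)⁻¹ = _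
      group
    have hmem' : f y₁ * (f x₁)⁻¹ ∈ D' := by rw [hval]; exact hm
    have h2 : Quotient.mk (QuotientGroup.rightRel M') (f x₁) =
        Quotient.mk (QuotientGroup.rightRel M') (f y₁) :=
      Quotient.sound (QuotientGroup.rightRel_apply.mpr (hD'M' hmem'))
    rw [hF1, hF1] at h2
    have hq : Quotient.mk (QuotientGroup.rightRel M) x₁ =
        Quotient.mk (QuotientGroup.rightRel M) y₁ := ψ.injective h2
    have hmM : y₁ * x₁⁻¹ ∈ M := QuotientGroup.rightRel_apply.mp (Quotient.exact hq)
    have hD : y₁ * x₁⁻¹ ∈ D := by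
      refine (hΦD ⟨y₁ * x₁⁻¹, hmM⟩).mp ?_
      rw [← hF2 x₁ y₁ hq hmM]; exact hmem'
    have hmy : y₁ * y⁻¹ ∈ M := QuotientGroup.rightRel_apply.mp (Quotient.exact hqy₁.symm)
    have hy₁H : y₁ * y⁻¹ ∈ H := by
      refine (hΦH ⟨y₁ * y⁻¹, hmy⟩).mp ?_
      rw [← hF2 y y₁ hqy₁.symm hmy, hfy₁]
      show k₁ * f y * (f y)⁻¹ ∈ H
      have : k₁ * f y * (f y)⁻¹ = k₁ := by group
      rw [this]; exact hk₁
    have hmx : x₁ * x⁻¹ ∈ M := QuotientGroup.rightRel_apply.mp (Quotient.exact hqx₁.symm)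
    have hx₁H : x₁ * x⁻¹ ∈ H := by
      refine (hΦH ⟨x₁ * x⁻¹, hmx⟩).mp ?_
      rw [← hF2 x x₁ hqx₁.symm hmx, hfx₁]
      show k₂⁻¹ * f x * (f x)⁻¹ ∈ H
      have : k₂⁻¹ * f x * (f x)⁻¹ = k₂⁻¹ := by group
      rw [this]; exact H.inv_mem hk₂
    refine ⟨y₁ * y⁻¹, hy₁H, x * x₁⁻¹, ?_, ?_⟩
    · have : x * x₁⁻¹ = (x₁ * x⁻¹)⁻¹ := by group
      rw [this]; exact H.inv_mem hx₁H
    · have : (y₁ * y⁻¹) * (y * x⁻¹) * (x * x₁⁻¹) = y₁ * x₁⁻¹ := by group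
      rw [this]; exact hD

/-- Let `H` be a core-free subgroup of a finite group `G` and `S ⊆ G \ H`, and suppose
`Γ = Cos(G,H,HSH)` is a GI-graph of `G`: every coset graph `Cos(G,H,HTH)` isomorphic to
`Γ` arises from `S` via an automorphism of `G` fixing `H` setwise.  Then for every
embedding `φ : ⟨H ∪ S⟩ → G` with `φ(H) = H` there is `τ ∈ Aut(G)` with `H^τ = H` and
`⟨H ∪ S⟩^τ = ⟨H ∪ φ(S)⟩`. -/
theorem gi_graph_component {G : Type*} [Group G] [Fintype G]
    (H : Subgroup G) (hcf : ∀ N : Subgroup G, N.Normal → N ≤ H → N = ⊥)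
    (S : Set G) (hS : S ⊆ ((H : Set G))ᶜ)
    (φ : ↥(Subgroup.closure ((H : Set G) ∪ S)) →* G) (hinj : Function.Injective φ)
    (hφH : ⇑φ '' {m : ↥(Subgroup.closure ((H : Set G) ∪ S)) | (m : G) ∈ H} =
      (H : Set G))
    (hGI : ∀ T : Set G, T ⊆ ((H : Set G))ᶜ →
      (∃ e : Quotient (QuotientGroup.rightRel H) ≃ Quotient (QuotientGroup.rightRel H),
        ∀ u v, cosetRel H ((H : Set G) * S * (H : Set G)) u v ↔
          cosetRel H ((H : Set G) * T * (H : Set G)) (e u) (e v)) →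
      ∃ τ : MulAut G, ⇑τ '' (H : Set G) = (H : Set G) ∧
        (H : Set G) * (⇑τ '' S) * (H : Set G) = (H : Set G) * T * (H : Set G)) :
    ∃ τ : MulAut G, ⇑τ '' (H : Set G) = (H : Set G) ∧
      Subgroup.map τ.toMonoidHom (Subgroup.closure ((H : Set G) ∪ S)) =
        Subgroup.closure ((H : Set G) ∪
          (⇑φ '' {m : ↥(Subgroup.closure ((H : Set G) ∪ S)) | (m : G) ∈ S})) := by

  classical
  have hHM : H ≤ Subgroup.closure ((H : Set G) ∪ S) :=
    fun x hx => Subgroup.subset_closure (Or.inl hx)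
  have hSM : ∀ x ∈ S, x ∈ Subgroup.closure ((H : Set G) ∪ S) :=
    fun x hx => Subgroup.subset_closure (Or.inr hx)
  set T : Set G := ⇑φ '' {m : ↥(Subgroup.closure ((H : Set G) ∪ S)) | (m : G) ∈ S} with hTdef
  have hφHmem : ∀ m : ↥(Subgroup.closure ((H : Set G) ∪ S)), φ m ∈ H ↔ (m : G) ∈ H := by
    intro m
    constructor
    · intro h
      have h2 : φ m ∈ ⇑φ '' {m : ↥(Subgroup.closure ((H : Set G) ∪ S)) | (m : G) ∈ H} := by
        rw [hφH]; exact h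
      obtain ⟨m', hm', heq⟩ := h2
      rwa [← hinj heq]
    · intro h
      have h2 : φ m ∈ ⇑φ '' {m : ↥(Subgroup.closure ((H : Set G) ∪ S)) | (m : G) ∈ H} :=
        ⟨m, h, rfl⟩
      rwa [hφH] at h2
  have hφTmem : ∀ m : ↥(Subgroup.closure ((H : Set G) ∪ S)), φ m ∈ T ↔ (m : G) ∈ S := by
    intro m
    constructor
    · rintro ⟨m', hm', heq⟩
      rwa [← hinj heq]
    · intro h
      exact ⟨m, h, rfl⟩
  have hTc : T ⊆ ((H : Set G))ᶜ := by
    rintro t ⟨m, hm, rfl⟩ ht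
    exact hS hm ((hφHmem m).mp ht)
  have hHM' : H ≤ φ.range := by
    intro x hx
    have h2 : x ∈ ⇑φ '' {m : ↥(Subgroup.closure ((H : Set G) ∪ S)) | (m : G) ∈ H} := by
      rw [hφH]; exact hx
    obtain ⟨m, _, rfl⟩ := h2
    exact ⟨m, rfl⟩
  have hDM : (H : Set G) * S * (H : Set G) ⊆ ((Subgroup.closure ((H : Set G) ∪ S) : Subgroup G) : Set G) := by
    intro z hz
    obtain ⟨h, hh, s, hs, h', hh', rfl⟩ := (mem_HSH_iff H S z).mp hz
    exact mul_mem (mul_mem (hHM hh) (hSM s hs)) (hHM hh')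
  have hD'M' : (H : Set G) * T * (H : Set G) ⊆ (φ.range : Set G) := by
    intro z hz
    obtain ⟨h, hh, t, ht, h', hh', rfl⟩ := (mem_HSH_iff H T z).mp hz
    obtain ⟨m, _, rfl⟩ := ht
    exact mul_mem (mul_mem (hHM' hh) ⟨m, rfl⟩) (hHM' hh')
  have keyA : ∀ m : ↥(Subgroup.closure ((H : Set G) ∪ S)), φ m ∈ (H : Set G) * T * (H : Set G) ↔
      (m : G) ∈ (H : Set G) * S * (H : Set G) := by
    intro m
    rw [mem_HSH_iff, mem_HSH_iff]
    constructor
    · rintro ⟨a, ha, t, ht, a', ha', heq⟩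
      obtain ⟨mh, hmh, rfl⟩ : a ∈ ⇑φ '' {m : ↥(Subgroup.closure ((H : Set G) ∪ S)) | (m : G) ∈ H} := by
        rw [hφH]; exact ha
      obtain ⟨ms, hms, rfl⟩ := ht
      obtain ⟨mh', hmh', rfl⟩ : a' ∈ ⇑φ '' {m : ↥(Subgroup.closure ((H : Set G) ∪ S)) | (m : G) ∈ H} := by
        rw [hφH]; exact ha'
      have h3 : mh * ms * mh' = m := hinj (by rw [map_mul, map_mul]; exact heq)
      refine ⟨mh, hmh, ms, hms, mh', hmh', ?_⟩
      rw [← h3]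
      push_cast
      rfl
    · rintro ⟨h, hh, s, hs, h', hh', heq⟩
      refine ⟨φ ⟨h, hHM hh⟩, (hφHmem _).mpr hh, φ ⟨s, hSM s hs⟩, (hφTmem _).mpr hs,
        φ ⟨h', hHM hh'⟩, (hφHmem _).mpr hh', ?_⟩
      rw [← map_mul, ← map_mul]
      congr 1
      ext
      push_cast
      exact heq
  obtain ⟨e, he⟩ := exists_coset_iso H (Subgroup.closure ((H : Set G) ∪ S)) φ.range hHM hHM'
    ((H : Set G) * S * (H : Set G)) ((H : Set G) * T * (H : Set G)) hDM hD'M'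
    (MonoidHom.ofInjective hinj)
    (by intro m; rw [MonoidHom.ofInjective_apply]; exact hφHmem m)
    (by intro m; rw [MonoidHom.ofInjective_apply]; exact keyA m)
  obtain ⟨τ, hτH, hτS⟩ := hGI T hTc ⟨e, he⟩
  refine ⟨τ, hτH, ?_⟩
  rw [MonoidHom.map_closure, Set.image_union]
  simp only [MulEquiv.coe_toMonoidHom]
  rw [hτH, closure_union_HSH H (⇑τ '' S), hτS, ← closure_union_HSH H T]
end
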